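/- Let s ≥ 1, set d := k + s − 1, assume d ≤ n − 2, and let λ : {1,…,n} × {0,…,s−1} → F be injective. Let 𝓕, 𝓡 ⊆ {1,…,n} be disjoint sets with |𝓕| = 2 and |𝓡| = d. Then there exist: first-round download functions φ_{u,j} : N → M for each u ∈ 𝓕 and j ∈ 𝓡; exchange functions ψ_{u,v} : (𝓡 → M) → M for each ordered pair of distinct u, v ∈ 𝓕; and recovery functions ρ_u : (𝓡 → M) × ((𝓕∖{u}) → M) → N for each u ∈ 𝓕; such that for every codeword c of C(n,k,s,s+1,λ) and every u ∈ 𝓕, ρ_u( (j ↦ φ_{u,j}(c_j)), (v ↦ ψ_{v,u}(j ↦ φ_{v,j}(c_j))) ) = c_u, where c_i ∈ N denotes the i-th node (b,a) ↦ c(i,b,a). Since each of the 2d first-round messages and each of the 2 exchange messages consists of s^n symbols of F, the total repair bandwidth is 2(d+1)·s^n symbols, which meets the cooperative cut-set bound |𝓕|(|𝓡|+|𝓕|−1)·l / (|𝓕|+|𝓡|−k) with equality for node size l = (s+1)·s^n = (d+2−k)·s^n. -/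
import Mathlib


/-- The code `C(n,k,s,m,λ)`: an array `c : {1,…,n} × {1,…,m} × {0,…,s-1}^n → F`
(node index `i : Fin n`, block index `b ∈ {1,…,m}` as a natural number,
`a : Fin n → Fin s`) satisfying the parity-check equations
`∑_{i=1}^n λ(i,a_i)^t · c(i,b,a) = 0` for all `t ∈ {0,…,n-k-1}`,
`b ∈ {1,…,m}` and `a ∈ {0,…,s-1}^n`. -/
def IsCodeword {F : Type*} [Field F] {n : ℕ} (k s m : ℕ)
    (lam : Fin n → Fin s → F) (c : Fin n → ℕ → (Fin n → Fin s) → F) : Prop :=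
  ∀ t < n - k, ∀ b ∈ Finset.Icc 1 m, ∀ a : Fin n → Fin s,
    ∑ i, lam i (a i) ^ t * c i b a = 0

section Aux

variable {F : Type*} [Field F] {n s : ℕ}

/-- Enumeration of the blocks `{1,…,s+1} \ {mu}` by `Fin s`. -/
def blk (s mu : ℕ) (x : Fin s) : ℕ := if (x : ℕ) + 1 < mu then (x : ℕ) + 1 else (x : ℕ) + 2

/-- Mixing coefficient used by the failed node whose partner's missing block is `mv`. -/
def kap (lam : Fin n → Fin s → F) (v : Fin n) (mv b : ℕ) (t : Fin s) : F :=
  if b = mv then 0 else lam v t ^ (b - 1)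

/-- The canonical message (download or exchange) computed from node-content `g`,
aggregating over coordinate `u`, mixing block `blk s mu (a u)` with block `mu`. -/
def msg (lam : Fin n → Fin s → F) (u v : Fin n) (mu mv : ℕ)
    (g : ℕ → (Fin n → Fin s) → F) (a : Fin n → Fin s) : F :=
  (∑ ξ, g (blk s mu (a u)) (Function.update a u ξ))
    + kap lam v mv (blk s mu (a u)) (a v) * ∑ ξ, g mu (Function.update a u ξ)

lemma blk_mem {mu : ℕ} (hs : 0 < s) (hmu : mu = 1 ∨ mu = s + 1) (x : Fin s) :
    (1 ≤ blk s mu x ∧ blk s mu x ≤ s + 1) ∧ blk s mu x ≠ mu := by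
  have hx := x.isLt
  rcases hmu with h | h <;> simp only [blk, h] <;> split <;> omega

lemma vand {ι : Type*} [Fintype ι] (r x : ι → F) (hr : Function.Injective r)
    (h : ∀ t < Fintype.card ι, ∑ i, r i ^ t * x i = 0) : ∀ i, x i = 0 := by
  let e := Fintype.equivFin ι
  have hf : Function.Injective (r ∘ e.symm) := hr.comp e.symm.injective
  have hz : ∀ t : Fin (Fintype.card ι),
      ∑ j, (x ∘ e.symm) j * (r ∘ e.symm) j ^ (t : ℕ) = 0 := by
    intro t
    have h0 := h t t.isLt
    rw [← Equiv.sum_comp e.symm (fun i => r i ^ (t : ℕ) * x i)] at h0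
    simpa [mul_comm] using h0
  have h1 := Matrix.eq_zero_of_forall_pow_sum_mul_pow_eq_zero hf hz
  intro i
  have := congrFun h1 (e i)
  simpa [e] using this

lemma msg_unpack {lam : Fin n → Fin s → F} {u v : Fin n} {mu mv : ℕ}
    {g : ℕ → (Fin n → Fin s) → F} (hs : 0 < s) (huv : v ≠ u)
    (hmu : mu = 1 ∨ mu = s + 1)
    (hz : ∀ a, msg lam u v mu mv g a = 0) :
    ∀ b, 1 ≤ b → b ≤ s + 1 → b ≠ mu → ∀ a : Fin n → Fin s,
      (∑ ξ, g b (Function.update a u ξ))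
        + kap lam v mv b (a v) * ∑ ξ, g mu (Function.update a u ξ) = 0 := by
  intro b hb1 hb2 hbmu a
  obtain ⟨x, hx⟩ : ∃ x : Fin s, blk s mu x = b := by
    rcases hmu with h | h
    · exact ⟨⟨b - 2, by omega⟩, by simp only [blk, h]; split <;> omega⟩
    · exact ⟨⟨b - 1, by omega⟩, by simp only [blk, h]; split <;> omega⟩
  have h0 := hz (Function.update a u x)
  rw [msg] at h0
  rw [Function.update_self] at h0
  simp only [Function.update_idem, Function.update_of_ne huv, hx] at h0
  exact h0

end Aux

section Main

variable {F : Type*} [Field F] {n k s : ℕ}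

lemma L1 (hs : 0 < s) (hk : 1 ≤ k) (hkn : k + s + 1 ≤ n)
    {lam : Fin n → Fin s → F}
    (hlam : Function.Injective fun p : Fin n × Fin s => lam p.1 p.2)
    {Rs : Finset (Fin n)} (hRcard : Rs.card = k + s - 1)
    {u v : Fin n} (hu : u ∉ Rs) (hv : v ∉ Rs) (huv : v ≠ u)
    {mu mv : ℕ} (hmu : mu = 1 ∨ mu = s + 1)
    {c : Fin n → ℕ → (Fin n → Fin s) → F} (hc : IsCodeword k s (s + 1) lam c)
    (hD : ∀ j ∈ Rs, ∀ a, msg lam u v mu mv (c j) a = 0) :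
    (∀ b, 1 ≤ b → b ≤ s + 1 → b ≠ mu → ∀ a : Fin n → Fin s,
        c u b a + kap lam v mv b (a v) * c u mu a = 0)
    ∧ (∀ b, 1 ≤ b → b ≤ s + 1 → b ≠ mu → ∀ a : Fin n → Fin s,
        (∑ ξ, c v b (Function.update a u ξ))
          + kap lam v mv b (a v) * ∑ ξ, c v mu (Function.update a u ξ) = 0) := by
  classical
  have hD' : ∀ j ∈ Rs, ∀ b, 1 ≤ b → b ≤ s + 1 → b ≠ mu → ∀ a : Fin n → Fin s,
      (∑ ξ, c j b (Function.update a u ξ))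
        + kap lam v mv b (a v) * ∑ ξ, c j mu (Function.update a u ξ) = 0 :=
    fun j hj => msg_unpack hs huv hmu (hD j hj)
  have hmuI : 1 ≤ mu ∧ mu ≤ s + 1 := by rcases hmu with h | h <;> omega
  -- the key system, for a fixed `b` and `a`
  have key : ∀ b, 1 ≤ b → b ≤ s + 1 → b ≠ mu → ∀ a : Fin n → Fin s,
      (∀ ξ : Fin s, c u b (Function.update a u ξ)
          + kap lam v mv b (a v) * c u mu (Function.update a u ξ) = 0)
      ∧ ((∑ ξ, c v b (Function.update a u ξ))
          + kap lam v mv b (a v) * ∑ ξ, c v mu (Function.update a u ξ) = 0) := by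
    intro b hb1 hb2 hbmu a
    set O : Finset (Fin n) := Rsᶜ.erase u with hO
    have hvO : v ∈ O := by
      rw [hO, Finset.mem_erase, Finset.mem_compl]
      exact ⟨huv, hv⟩
    set κ := kap lam v mv b (a v) with hκ
    set r : (Fin s ⊕ {w // w ∈ O}) → F :=
      Sum.elim (fun ξ => lam u ξ) (fun w => lam w.1 (a w.1)) with hr
    set xv : (Fin s ⊕ {w // w ∈ O}) → F :=
      Sum.elim
        (fun ξ => c u b (Function.update a u ξ) + κ * c u mu (Function.update a u ξ))
        (fun w => (∑ ξ, c w.1 b (Function.update a u ξ))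
            + κ * ∑ ξ, c w.1 mu (Function.update a u ξ)) with hxv
    have hOcard : O.card = n - (k + s - 1) - 1 := by
      rw [hO, Finset.card_erase_of_mem (by simp [hu]), Finset.card_compl, hRcard]
      simp
    have hcard : Fintype.card (Fin s ⊕ {w // w ∈ O}) = n - k := by
      rw [Fintype.card_sum, Fintype.card_coe, hOcard, Fintype.card_fin]
      omega
    have hinj : Function.Injective r := by
      intro i i' hii
      have pair : ∀ {p q : Fin n × Fin s}, lam p.1 p.2 = lam q.1 q.2 → p = q :=
        fun h => hlam h
      match i, i' with
      | Sum.inl ξ, Sum.inl ξ' =>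
        have := pair (p := (u, ξ)) (q := (u, ξ')) hii
        simpa using congrArg Prod.snd this
      | Sum.inl ξ, Sum.inr w =>
        have := pair (p := (u, ξ)) (q := (w.1, a w.1)) hii
        have hw := (Finset.mem_erase.mp w.2).1
        exact absurd (congrArg Prod.fst this) (by simpa using hw.symm)
      | Sum.inr w, Sum.inl ξ =>
        have := pair (p := (w.1, a w.1)) (q := (u, ξ)) hii
        have hw := (Finset.mem_erase.mp w.2).1
        exact absurd (congrArg Prod.fst this) (by simpa using hw)
      | Sum.inr w, Sum.inr w' =>
        have := pair (p := (w.1, a w.1)) (q := (w'.1, a w'.1)) hii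
        exact congrArg Sum.inr (Subtype.ext (congrArg Prod.fst this))
    have hsys : ∀ t < Fintype.card (Fin s ⊕ {w // w ∈ O}), ∑ i, r i ^ t * xv i = 0 := by
      intro t ht
      rw [hcard] at ht
      -- per-fiber parity combination
      have hpar : ∀ ξ : Fin s,
          (∑ i, lam i (Function.update a u ξ i) ^ t *
            (c i b (Function.update a u ξ) + κ * c i mu (Function.update a u ξ))) = 0 := by
        intro ξ
        have h1 := hc t ht b (Finset.mem_Icc.mpr ⟨hb1, hb2⟩) (Function.update a u ξ)
        have h2 := hc t ht mu (Finset.mem_Icc.mpr hmuI) (Function.update a u ξ)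
        calc ∑ i, lam i (Function.update a u ξ i) ^ t *
              (c i b (Function.update a u ξ) + κ * c i mu (Function.update a u ξ))
            = (∑ i, lam i (Function.update a u ξ i) ^ t * c i b (Function.update a u ξ))
              + κ * ∑ i, lam i (Function.update a u ξ i) ^ t * c i mu (Function.update a u ξ) := by
              rw [Finset.mul_sum, ← Finset.sum_add_distrib]
              exact Finset.sum_congr rfl fun i _ => by ring
          _ = 0 := by rw [h1, h2]; ring
      -- total
      have hT : ∑ i, (∑ ξ : Fin s, lam i (Function.update a u ξ i) ^ t *
            (c i b (Function.update a u ξ) + κ * c i mu (Function.update a u ξ))) = 0 := by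
        rw [Finset.sum_comm]
        simp [hpar]
      -- the summand over `i`
      set G : Fin n → F := fun i => ∑ ξ : Fin s, lam i (Function.update a u ξ i) ^ t *
            (c i b (Function.update a u ξ) + κ * c i mu (Function.update a u ξ)) with hG
      have factor : ∀ (A : F) (X Y : Fin s → F),
          ∑ ξ, A * (X ξ + κ * Y ξ) = A * ((∑ ξ, X ξ) + κ * ∑ ξ, Y ξ) := by
        intro A X Y
        rw [mul_add, Finset.mul_sum, Finset.mul_sum, Finset.mul_sum, ← Finset.sum_add_distrib]
        exact Finset.sum_congr rfl fun ξ _ => by ring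
      have hGu : G u = ∑ ξ : Fin s, r (Sum.inl ξ) ^ t * xv (Sum.inl ξ) := by
        apply Finset.sum_congr rfl
        intro ξ _
        rw [Function.update_self]
        rfl
      have hGw : ∀ w : {w // w ∈ O}, G w.1 = r (Sum.inr w) ^ t * xv (Sum.inr w) := by
        intro w
        have hwu : w.1 ≠ u := (Finset.mem_erase.mp w.2).1
        calc G w.1 = ∑ ξ : Fin s, lam w.1 (a w.1) ^ t *
              (c w.1 b (Function.update a u ξ) + κ * c w.1 mu (Function.update a u ξ)) := by
              apply Finset.sum_congr rfl
              intro ξ _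
              rw [Function.update_of_ne hwu]
          _ = lam w.1 (a w.1) ^ t * ((∑ ξ, c w.1 b (Function.update a u ξ))
              + κ * ∑ ξ, c w.1 mu (Function.update a u ξ)) := factor _ _ _
          _ = r (Sum.inr w) ^ t * xv (Sum.inr w) := rfl
      have hGj : ∀ j ∈ Rs, G j = 0 := by
        intro j hj
        have hju : j ≠ u := fun h => hu (h ▸ hj)
        calc G j = ∑ ξ : Fin s, lam j (a j) ^ t *
              (c j b (Function.update a u ξ) + κ * c j mu (Function.update a u ξ)) := by
              apply Finset.sum_congr rfl
              intro ξ _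
              rw [Function.update_of_ne hju]
          _ = lam j (a j) ^ t * ((∑ ξ, c j b (Function.update a u ξ))
              + κ * ∑ ξ, c j mu (Function.update a u ξ)) := factor _ _ _
          _ = 0 := by rw [hD' j hj b hb1 hb2 hbmu a, mul_zero]
      -- split the sum over `Fin n`
      have hsplit : (∑ i, G i) = (∑ j ∈ Rs, G j) + ((G u) + ∑ w ∈ O, G w) := by
        rw [Finset.add_sum_erase _ G (by simp [hu] : u ∈ Rsᶜ)]
        rw [Finset.sum_add_sum_compl Rs G]
      rw [hsplit] at hT
      rw [Finset.sum_eq_zero hGj, zero_add] at hT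
      rw [Fintype.sum_sum_type]
      rw [← hGu]
      have : ∑ w : {w // w ∈ O}, r (Sum.inr w) ^ t * xv (Sum.inr w) = ∑ w ∈ O, G w := by
        rw [← Finset.sum_coe_sort O G]
        exact Finset.sum_congr rfl fun w _ => (hGw w).symm
      rw [this]
      exact hT
    have hzero := vand r xv hinj hsys
    constructor
    · intro ξ
      exact hzero (Sum.inl ξ)
    · exact hzero (Sum.inr ⟨v, hvO⟩)
  refine ⟨?_, fun b hb1 hb2 hbmu a => (key b hb1 hb2 hbmu a).2⟩
  intro b hb1 hb2 hbmu a
  have h0 := (key b hb1 hb2 hbmu a).1 (a u)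
  rwa [Function.update_eq_self] at h0

lemma IsCodeword_sub {m : ℕ} {lam : Fin n → Fin s → F}
    {c c' : Fin n → ℕ → (Fin n → Fin s) → F}
    (h : IsCodeword k s m lam c) (h' : IsCodeword k s m lam c') :
    IsCodeword k s m lam (fun i b a => c i b a - c' i b a) := by
  intro t ht b hb a
  have h1 := h t ht b hb a
  have h2 := h' t ht b hb a
  calc ∑ i, lam i (a i) ^ t * (c i b a - c' i b a)
      = (∑ i, lam i (a i) ^ t * c i b a) - ∑ i, lam i (a i) ^ t * c' i b a := by
        rw [← Finset.sum_sub_distrib]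
        exact Finset.sum_congr rfl fun i _ => by ring
    _ = 0 := by rw [h1, h2, sub_zero]

lemma msg_sub {lam : Fin n → Fin s → F} {u v : Fin n} {mu mv : ℕ}
    {g g' : ℕ → (Fin n → Fin s) → F} (a : Fin n → Fin s) :
    msg lam u v mu mv (fun b a => g b a - g' b a) a
      = msg lam u v mu mv g a - msg lam u v mu mv g' a := by
  simp only [msg, Finset.sum_sub_distrib, mul_sub]
  ring

lemma L2 (hs : 0 < s) (hk : 1 ≤ k) (hkn : k + s + 1 ≤ n)
    {lam : Fin n → Fin s → F}
    (hlam : Function.Injective fun p : Fin n × Fin s => lam p.1 p.2)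
    {Rs : Finset (Fin n)} (hRcard : Rs.card = k + s - 1)
    {u v : Fin n} (hu : u ∉ Rs) (hv : v ∉ Rs) (huv : u ≠ v)
    {mu mv : ℕ} (hm : mu = s + 1 ∧ mv = 1 ∨ mu = 1 ∧ mv = s + 1)
    {c : Fin n → ℕ → (Fin n → Fin s) → F} (hc : IsCodeword k s (s + 1) lam c)
    (hD : ∀ j ∈ Rs, ∀ a, msg lam u v mu mv (c j) a = 0)
    (hX : ∀ a, msg lam v u mv mu (c u) a = 0) :
    ∀ b, 1 ≤ b → b ≤ s + 1 → ∀ a : Fin n → Fin s, c u b a = 0 := by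
  have hmu : mu = 1 ∨ mu = s + 1 := by rcases hm with ⟨h1, _⟩ | ⟨h1, _⟩ <;> omega
  have hmv : mv = 1 ∨ mv = s + 1 := by rcases hm with ⟨_, h2⟩ | ⟨_, h2⟩ <;> omega
  have hmumv : mu ≠ mv := by rcases hm with ⟨h1, h2⟩ | ⟨h1, h2⟩ <;> omega
  obtain ⟨hi, -⟩ := L1 hs hk hkn hlam hRcard hu hv (Ne.symm huv) hmu hc hD
  have hmv0 : ∀ a : Fin n → Fin s, c u mv a = 0 := by
    intro a
    have h0 := hi mv (by omega) (by omega) (Ne.symm hmumv) a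
    rwa [kap, if_pos rfl, zero_mul, add_zero] at h0
  have hX' := msg_unpack hs huv hmv hX
  have hX'' : ∀ b, 1 ≤ b → b ≤ s + 1 → b ≠ mv → ∀ a : Fin n → Fin s,
      (∑ ξ, c u b (Function.update a v ξ)) = 0 := by
    intro b h1 h2 h3 a
    have h0 := hX' b h1 h2 h3 a
    simp only [hmv0, Finset.sum_const_zero, mul_zero, add_zero] at h0
    exact h0
  have key : ∀ a : Fin n → Fin s, ∀ ξ : Fin s, c u mu (Function.update a v ξ) = 0 := by
    intro a
    apply vand (fun ξ : Fin s => lam v ξ) (fun ξ => c u mu (Function.update a v ξ))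
    · intro ξ ξ' h
      have h2 := hlam (show lam (v, ξ).1 (v, ξ).2 = lam (v, ξ').1 (v, ξ').2 from h)
      exact congrArg Prod.snd h2
    · intro t ht
      rw [Fintype.card_fin] at ht
      rcases Nat.eq_zero_or_pos t with h0 | hpos
      · subst h0
        simpa [pow_zero, one_mul] using hX'' mu (by omega) (by omega) hmumv a
      · have hbmu : t + 1 ≠ mu := by rcases hm with ⟨h1, _⟩ | ⟨h1, _⟩ <;> omega
        have hbmv : t + 1 ≠ mv := by rcases hm with ⟨_, h2⟩ | ⟨_, h2⟩ <;> omega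
        have h1 := hX'' (t + 1) (by omega) (by omega) hbmv a
        have h2 : ∀ ξ : Fin s, c u (t + 1) (Function.update a v ξ)
            = -(lam v ξ ^ t * c u mu (Function.update a v ξ)) := by
          intro ξ
          have h3 := hi (t + 1) (by omega) (by omega) hbmu (Function.update a v ξ)
          rw [kap, if_neg hbmv, Function.update_self] at h3
          rw [show t + 1 - 1 = t by omega] at h3
          linear_combination h3
        have h4 : ∑ ξ, lam v ξ ^ t * c u mu (Function.update a v ξ)
            = -∑ ξ, c u (t + 1) (Function.update a v ξ) := by
          rw [← Finset.sum_neg_distrib]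
          exact Finset.sum_congr rfl fun ξ _ => by rw [h2 ξ, neg_neg]
        rw [h4, h1, neg_zero]
  have hmu0 : ∀ a : Fin n → Fin s, c u mu a = 0 := by
    intro a
    have h0 := key a (a v)
    rwa [Function.update_eq_self] at h0
  intro b h1 h2 a
  by_cases hb : b = mu
  · rw [hb]; exact hmu0 a
  · have h0 := hi b h1 h2 hb a
    rw [hmu0 a, mul_zero, add_zero] at h0
    exact h0

lemma exch_unique (hs : 0 < s) (hk : 1 ≤ k) (hkn : k + s + 1 ≤ n)
    {lam : Fin n → Fin s → F}
    (hlam : Function.Injective fun p : Fin n × Fin s => lam p.1 p.2)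
    {Rs : Finset (Fin n)} (hRcard : Rs.card = k + s - 1)
    {u v : Fin n} (hu : u ∉ Rs) (hv : v ∉ Rs) (huv : u ≠ v)
    {mu mv : ℕ} (hmv : mv = 1 ∨ mv = s + 1)
    {c c' : Fin n → ℕ → (Fin n → Fin s) → F}
    (hc : IsCodeword k s (s + 1) lam c) (hc' : IsCodeword k s (s + 1) lam c')
    (hmatch : ∀ j ∈ Rs, ∀ a, msg lam v u mv mu (c' j) a = msg lam v u mv mu (c j) a) :
    ∀ a, msg lam v u mv mu (c' u) a = msg lam v u mv mu (c u) a := by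
  set d : Fin n → ℕ → (Fin n → Fin s) → F := fun i b a => c' i b a - c i b a with hdd
  have hd : IsCodeword k s (s + 1) lam d := IsCodeword_sub hc' hc
  have hD0 : ∀ j ∈ Rs, ∀ a, msg lam v u mv mu (d j) a = 0 := by
    intro j hj a
    rw [show d j = fun b a => c' j b a - c j b a from rfl, msg_sub, hmatch j hj a, sub_self]
  obtain ⟨-, hii⟩ := L1 hs hk hkn hlam hRcard hv hu huv hmv hd hD0
  intro a
  obtain ⟨⟨hb1, hb2⟩, hb3⟩ := blk_mem (mu := mv) hs hmv (a v)
  have h0 := hii (blk s mv (a v)) hb1 hb2 hb3 a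
  have hmsgd : msg lam v u mv mu (d u) a = 0 := h0
  rw [show d u = fun b a => c' u b a - c u b a from rfl, msg_sub] at hmsgd
  exact sub_eq_zero.mp hmsgd

lemma rho_unique (hs : 0 < s) (hk : 1 ≤ k) (hkn : k + s + 1 ≤ n)
    {lam : Fin n → Fin s → F}
    (hlam : Function.Injective fun p : Fin n × Fin s => lam p.1 p.2)
    {Rs : Finset (Fin n)} (hRcard : Rs.card = k + s - 1)
    {u v : Fin n} (hu : u ∉ Rs) (hv : v ∉ Rs) (huv : u ≠ v)
    {mu mv : ℕ} (hm : mu = s + 1 ∧ mv = 1 ∨ mu = 1 ∧ mv = s + 1)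
    {c c' : Fin n → ℕ → (Fin n → Fin s) → F}
    (hc : IsCodeword k s (s + 1) lam c) (hc' : IsCodeword k s (s + 1) lam c')
    (hmatch : ∀ j ∈ Rs, ∀ a, msg lam u v mu mv (c' j) a = msg lam u v mu mv (c j) a)
    (hX : ∀ a, msg lam v u mv mu (c' u) a = msg lam v u mv mu (c u) a) :
    ∀ b, 1 ≤ b → b ≤ s + 1 → ∀ a : Fin n → Fin s, c' u b a = c u b a := by
  set d : Fin n → ℕ → (Fin n → Fin s) → F := fun i b a => c' i b a - c i b a with hdd
  have hd : IsCodeword k s (s + 1) lam d := IsCodeword_sub hc' hc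
  have hD0 : ∀ j ∈ Rs, ∀ a, msg lam u v mu mv (d j) a = 0 := by
    intro j hj a
    rw [show d j = fun b a => c' j b a - c j b a from rfl, msg_sub, hmatch j hj a, sub_self]
  have hX0 : ∀ a, msg lam v u mv mu (d u) a = 0 := by
    intro a
    rw [show d u = fun b a => c' u b a - c u b a from rfl, msg_sub, hX a, sub_self]
  have h0 := L2 hs hk hkn hlam hRcard hu hv huv hm hd hD0 hX0
  intro b h1 h2 a
  have := h0 b h1 h2 a
  simp only [hdd] at this
  exact sub_eq_zero.mp this

def oth (u₀ u₁ w : Fin n) : Fin n := if w = u₀ then u₁ else u₀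

def mss (s : ℕ) (u₀ w : Fin n) : ℕ := if w = u₀ then s + 1 else 1

def phiD (lam : Fin n → Fin s → F) (u₀ u₁ : Fin n) :
    Fin n → Fin n → (ℕ → (Fin n → Fin s) → F) → ((Fin n → Fin s) → F) :=
  fun w _ g => msg lam w (oth u₀ u₁ w) (mss s u₀ w) (mss s u₀ (oth u₀ u₁ w)) g

def exchD (lam : Fin n → Fin s → F) (u₀ u₁ w : Fin n)
    (c : Fin n → ℕ → (Fin n → Fin s) → F) : (Fin n → Fin s) → F :=
  phiD lam u₀ u₁ w w (c (oth u₀ u₁ w))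

open Classical in
noncomputable def psiD (k : ℕ) (lam : Fin n → Fin s → F) (Rs : Finset (Fin n)) (u₀ u₁ : Fin n) :
    Fin n → Fin n → ({j // j ∈ Rs} → (Fin n → Fin s) → F) → ((Fin n → Fin s) → F) :=
  fun w _ f =>
    if h : ∃ c, IsCodeword k s (s + 1) lam c ∧
        ∀ j : {j // j ∈ Rs}, phiD lam u₀ u₁ w j.1 (c j.1) = f j
    then exchD lam u₀ u₁ w h.choose else fun _ => 0

open Classical in
noncomputable def rhoD (k : ℕ) (lam : Fin n → Fin s → F) (Fs Rs : Finset (Fin n)) (u₀ u₁ : Fin n) :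
    (u : Fin n) → ({j // j ∈ Rs} → (Fin n → Fin s) → F) →
      ({v // v ∈ Fs.erase u} → (Fin n → Fin s) → F) → (ℕ → (Fin n → Fin s) → F) :=
  fun u f g =>
    if h : ∃ c, IsCodeword k s (s + 1) lam c ∧
        (∀ j : {j // j ∈ Rs}, phiD lam u₀ u₁ u j.1 (c j.1) = f j) ∧
        (∀ t : {t // t ∈ Fs.erase u}, g t = exchD lam u₀ u₁ t.1 c)
    then h.choose u else fun _ _ => 0

lemma main_step (hs : 0 < s) (hk : 1 ≤ k) (hkn : k + s + 1 ≤ n)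
    {lam : Fin n → Fin s → F}
    (hlam : Function.Injective fun p : Fin n × Fin s => lam p.1 p.2)
    {Fs Rs : Finset (Fin n)} (hdisj : Disjoint Fs Rs)
    (hRcard : Rs.card = k + s - 1)
    (u₀ u₁ : Fin n) {u : Fin n}
    (huF : u ∈ Fs) (hvF : oth u₀ u₁ u ∈ Fs) (hvu : oth u₀ u₁ u ≠ u)
    (hoth2 : oth u₀ u₁ (oth u₀ u₁ u) = u)
    (hErase : Fs.erase u = {oth u₀ u₁ u})
    (hm : (mss s u₀ u = s + 1 ∧ mss s u₀ (oth u₀ u₁ u) = 1)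
        ∨ (mss s u₀ u = 1 ∧ mss s u₀ (oth u₀ u₁ u) = s + 1))
    {c : Fin n → ℕ → (Fin n → Fin s) → F} (hc : IsCodeword k s (s + 1) lam c) :
    ∀ b, 1 ≤ b → b ≤ s + 1 → ∀ a : Fin n → Fin s,
      rhoD k lam Fs Rs u₀ u₁ u (fun j => phiD lam u₀ u₁ u j.1 (c j.1))
        (fun t => psiD k lam Rs u₀ u₁ t.1 u (fun j => phiD lam u₀ u₁ t.1 j.1 (c j.1))) b a
      = c u b a := by
  classical
  set v := oth u₀ u₁ u with hvdef
  have huR : u ∉ Rs := Finset.disjoint_left.mp hdisj huF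
  have hvR : v ∉ Rs := Finset.disjoint_left.mp hdisj hvF
  have hmv : mss s u₀ v = 1 ∨ mss s u₀ v = s + 1 := by
    rcases hm with ⟨_, h2⟩ | ⟨_, h2⟩ <;> omega
  have hphiv : ∀ (j : Fin n) (g : ℕ → (Fin n → Fin s) → F),
      phiD lam u₀ u₁ v j g = msg lam v u (mss s u₀ v) (mss s u₀ u) g := by
    intro j g
    simp only [phiD, hoth2]
  have hexchEq : ∀ c' : Fin n → ℕ → (Fin n → Fin s) → F,
      exchD lam u₀ u₁ v c' = msg lam v u (mss s u₀ v) (mss s u₀ u) (c' u) := by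
    intro c'
    simp only [exchD, phiD, hoth2]
  -- Step 1 : the exchange message is the canonical one
  have hpsi : psiD k lam Rs u₀ u₁ v u (fun j => phiD lam u₀ u₁ v j.1 (c j.1))
      = exchD lam u₀ u₁ v c := by
    simp only [psiD]
    have hex : ∃ c', IsCodeword k s (s + 1) lam c' ∧
        ∀ j : {j // j ∈ Rs}, phiD lam u₀ u₁ v j.1 (c' j.1)
          = (fun j : {j // j ∈ Rs} => phiD lam u₀ u₁ v j.1 (c j.1)) j :=
      ⟨c, hc, fun _ => rfl⟩
    rw [dif_pos hex]
    obtain ⟨hc', hmatch⟩ := hex.choose_spec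
    rw [hexchEq, hexchEq]
    funext a
    refine exch_unique hs hk hkn hlam hRcard huR hvR (Ne.symm hvu) hmv hc hc' ?_ a
    intro j hj a'
    have h0 := congrFun (hmatch ⟨j, hj⟩) a'
    simpa only [hphiv] using h0
  -- Step 2 : the recovery
  intro b hb1 hb2 a
  have hex2 : ∃ c', IsCodeword k s (s + 1) lam c' ∧
      (∀ j : {j // j ∈ Rs}, phiD lam u₀ u₁ u j.1 (c' j.1)
        = phiD lam u₀ u₁ u j.1 (c j.1)) ∧
      (∀ t : {t // t ∈ Fs.erase u},
        (psiD k lam Rs u₀ u₁ t.1 u fun j => phiD lam u₀ u₁ t.1 j.1 (c j.1))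
        = exchD lam u₀ u₁ t.1 c') := by
    refine ⟨c, hc, fun _ => rfl, ?_⟩
    rintro ⟨t, htm⟩
    have ht : t = v := by
      rw [hErase] at htm
      simpa using htm
    subst ht
    exact hpsi
  simp only [rhoD]
  rw [dif_pos hex2]
  obtain ⟨hc', hmatch, hexch⟩ := hex2.choose_spec
  have hXeq : ∀ a', msg lam v u (mss s u₀ v) (mss s u₀ u) (hex2.choose u) a'
      = msg lam v u (mss s u₀ v) (mss s u₀ u) (c u) a' := by
    have hvmem : v ∈ Fs.erase u := by rw [hErase]; simp
    have h0 := hexch ⟨v, hvmem⟩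
    simp only at h0
    rw [hpsi] at h0
    have h1 : exchD lam u₀ u₁ v c = exchD lam u₀ u₁ v hex2.choose := h0
    rw [hexchEq, hexchEq] at h1
    intro a'
    exact (congrFun h1 a').symm
  refine rho_unique hs hk hkn hlam hRcard huR hvR (Ne.symm hvu) hm hc hc' ?_ hXeq b hb1 hb2 a
  intro j hj a'
  exact congrFun (hmatch ⟨j, hj⟩) a'

end Main


/-- `C(n,k,s,s+1,λ)` is a `(2,d)`-MSR code under the cooperative
model, where `s ≥ 1` and `d := k+s-1 ≤ n-2` (expressed by `k + s + 1 ≤ n`).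
For any two failed nodes `Fs` and any `d` helper nodes `Rs` there exist
first-round download functions `φ u j` (one message, i.e. one element of
`M = (Fin n → Fin s) → F ≅ F^(s^n)`, sent from helper `j` to failed node `u`),
exchange functions `ψ u v` (one message of `M` computed by `u` from its
first-round downloads and sent to the other failed node `v`), and recovery
functions `ρ u`, such that every failed node recovers all of its coordinates
`(b,a)`, `b ∈ {1,…,s+1}`.  The total bandwidth, `2d + 2` messages of `s^n`
field symbols each, meets the cooperative cut-set bound with equality. -/
theorem stmt_9 {F : Type*} [Field F] (n k s : ℕ) [NeZero s]
    (hk : 1 ≤ k) (hkn : k + s + 1 ≤ n)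
    (lam : Fin n → Fin s → F)
    (hlam : Function.Injective fun p : Fin n × Fin s => lam p.1 p.2)
    (Fs Rs : Finset (Fin n)) (hdisj : Disjoint Fs Rs)
    (hFcard : Fs.card = 2) (hRcard : Rs.card = k + s - 1) :
    ∃ (φ : Fin n → Fin n → (ℕ → (Fin n → Fin s) → F) → ((Fin n → Fin s) → F))
      (ψ : Fin n → Fin n → ({j // j ∈ Rs} → (Fin n → Fin s) → F) → ((Fin n → Fin s) → F))
      (ρ : (u : Fin n) → ({j // j ∈ Rs} → (Fin n → Fin s) → F) →
            ({v // v ∈ Fs.erase u} → (Fin n → Fin s) → F) → (ℕ → (Fin n → Fin s) → F)),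
      ∀ c : Fin n → ℕ → (Fin n → Fin s) → F, IsCodeword k s (s + 1) lam c →
        ∀ u ∈ Fs, ∀ b ∈ Finset.Icc 1 (s + 1), ∀ a : Fin n → Fin s,
          ρ u (fun j => φ u j.1 (c j.1))
              (fun v => ψ v.1 u (fun j => φ v.1 j.1 (c j.1))) b a
            = c u b a := by
  classical
  have hs : 0 < s := Nat.pos_of_ne_zero (NeZero.ne s)
  obtain ⟨u₀, u₁, hne, hFs⟩ := Finset.card_eq_two.mp hFcard
  refine ⟨phiD lam u₀ u₁, psiD k lam Rs u₀ u₁, rhoD k lam Fs Rs u₀ u₁, ?_⟩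
  intro c hc u hu b hb a
  rw [Finset.mem_Icc] at hb
  have hu01 : u = u₀ ∨ u = u₁ := by rw [hFs] at hu; simpa using hu
  rcases hu01 with h | h
  · have e1 : oth u₀ u₁ u = u₁ := by simp [oth, h]
    refine main_step hs hk hkn hlam hdisj hRcard u₀ u₁ hu
      (by simp [e1, hFs]) (by rw [e1, h]; exact hne.symm)
      (by rw [e1]; simp [oth, hne.symm, ← h])
      (by rw [e1, h, hFs, Finset.erase_insert (by simp [hne])])
      (Or.inl ⟨by simp [mss, h], by simp [e1, mss, hne.symm]⟩)
      hc b hb.1 hb.2 a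
  · have e1 : oth u₀ u₁ u = u₀ := by simp [oth, h, hne.symm]
    refine main_step hs hk hkn hlam hdisj hRcard u₀ u₁ hu
      (by simp [e1, hFs]) (by rw [e1, h]; exact hne)
      (by rw [e1]; simp [oth, ← h])
      (by rw [e1, h, hFs, Finset.pair_comm, Finset.erase_insert (by simp [hne.symm])])
      (Or.inr ⟨by simp [mss, h, hne.symm], by simp [e1, mss]⟩)
      hc b hb.1 hb.2 a
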